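/- Let 1 < ℓ < m, 1 ≤ k < m, d = log k / log m, and μ the uniform measure on a Bedford-McMullen set K with uniform fibers (mass (kℓ)^{-n} per generation-n rectangle). Then there exists C > 0 such that μ(B(x,r)) ≤ C·r^{1+d} for every x ∈ K and r > 0. -/

import Mathlib

open MeasureTheory ENNReal

/-- The Bedford-McMullen set determined by the sequence of patterns `D`. -/
noncomputable def BMset (m l : ℕ) (D : ℕ → Finset (Fin m × Fin l)) : Set (ℝ × ℝ) :=
  { p | ∃ ω : ℕ → Fin m × Fin l, (∀ n, ω n ∈ D n) ∧
      p.1 = ∑' n : ℕ, ((ω n).1 : ℝ) / m ^ (n + 1) ∧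
      p.2 = ∑' n : ℕ, ((ω n).2 : ℝ) / l ^ (n + 1) }

/-- The patterns have uniform fibers: each row contains exactly `k` elements. -/
def UniformFibers {m l : ℕ} (k : ℕ) (D : ℕ → Finset (Fin m × Fin l)) : Prop :=
  ∀ n, ∀ r : Fin l, ((D n).filter (fun q => q.2 = r)).card = k

/-- The generation-`n` rectangle determined by the word `w` of digits. -/
noncomputable def cylRect (m l : ℕ) (n : ℕ) (w : Fin n → Fin m × Fin l) : Set (ℝ × ℝ) :=
  Set.Icc (∑ i : Fin n, ((w i).1 : ℝ) / m ^ (i.1 + 1))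
      ((∑ i : Fin n, ((w i).1 : ℝ) / m ^ (i.1 + 1)) + 1 / m ^ n) ×ˢ
    Set.Icc (∑ i : Fin n, ((w i).2 : ℝ) / l ^ (i.1 + 1))
      ((∑ i : Fin n, ((w i).2 : ℝ) / l ^ (i.1 + 1)) + 1 / l ^ n)

/-- Telescoping geometric bound on a block of digit terms. -/
lemma digitIco_le {m : ℕ} (hm : 1 < m) (a : ℕ → ℕ) (ha : ∀ i, a i < m) {n N : ℕ} (h : n ≤ N) :
    ∑ i ∈ Finset.Ico n N, (a i : ℝ) / (m : ℝ) ^ (i + 1) ≤ 1 / (m : ℝ) ^ n - 1 / (m : ℝ) ^ N := by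
  have hm0 : (0:ℝ) < m := by positivity
  have hstep : ∀ i : ℕ, (a i : ℝ) / (m : ℝ) ^ (i + 1) ≤
      1 / (m : ℝ) ^ i - 1 / (m : ℝ) ^ (i + 1) := by
    intro i
    have h1 : (a i : ℝ) ≤ (m : ℝ) - 1 := by
      have : (a i : ℝ) + 1 ≤ (m : ℝ) := by exact_mod_cast Nat.succ_le_of_lt (ha i)
      linarith
    have hp : (0:ℝ) < (m:ℝ) ^ (i+1) := by positivity
    rw [div_le_iff₀ hp]
    have : (1 / (m : ℝ) ^ i - 1 / (m : ℝ) ^ (i + 1)) * (m : ℝ) ^ (i+1) = (m:ℝ) - 1 := by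
      field_simp
      ring
    rw [this]; exact h1
  calc ∑ i ∈ Finset.Ico n N, (a i : ℝ) / (m : ℝ) ^ (i + 1)
      ≤ ∑ i ∈ Finset.Ico n N, (1 / (m : ℝ) ^ i - 1 / (m : ℝ) ^ (i + 1)) :=
        Finset.sum_le_sum fun i _ => hstep i
    _ = 1 / (m : ℝ) ^ n - 1 / (m : ℝ) ^ N := by
        rw [Finset.sum_Ico_eq_sub _ h, Finset.sum_range_sub' (fun i => 1 / (m:ℝ)^i),
          Finset.sum_range_sub' (fun i => 1 / (m:ℝ)^i)]
        simp

lemma digit_summable {m : ℕ} (hm : 1 < m) (a : ℕ → ℕ) (ha : ∀ i, a i < m) :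
    Summable (fun i => (a i : ℝ) / (m : ℝ) ^ (i + 1)) := by
  have hm0 : (0:ℝ) < m := by positivity
  have hgeo : Summable (fun i : ℕ => (m:ℝ) * ((m:ℝ)⁻¹) ^ (i+1)) := by
    apply Summable.mul_left
    exact (summable_geometric_of_lt_one (by positivity)
      (by rw [inv_lt_one_iff₀]; right; exact_mod_cast hm)).comp_injective (add_left_injective 1)
  refine Summable.of_nonneg_of_le (fun i => by positivity) (fun i => ?_) hgeo
  rw [div_eq_mul_inv, ← inv_pow]
  have : (a i : ℝ) ≤ (m:ℝ) := by exact_mod_cast (ha i).le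
  exact mul_le_mul_of_nonneg_right this (by positivity)

set_option maxHeartbeats 1000000 in
/-- The point coded by digits lies in the level-`N` interval of its prefix. -/
lemma digit_tsum_mem {m : ℕ} (hm : 1 < m) (a : ℕ → ℕ) (ha : ∀ i, a i < m) (N : ℕ) :
    ∑' i, (a i : ℝ) / (m : ℝ) ^ (i + 1) ∈
      Set.Icc (∑ i ∈ Finset.range N, (a i : ℝ) / (m : ℝ) ^ (i + 1))
        ((∑ i ∈ Finset.range N, (a i : ℝ) / (m : ℝ) ^ (i + 1)) + 1 / (m : ℝ) ^ N) := by
  have hm0 : (0:ℝ) < m := by positivity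
  have hs := digit_summable hm a ha
  have hsplit := hs.sum_add_tsum_nat_add N
  have htail0 : 0 ≤ ∑' i, (a (i + N) : ℝ) / (m : ℝ) ^ (i + N + 1) :=
    tsum_nonneg (fun i => by positivity)
  have hs' : Summable (fun i => (a (i + N) : ℝ) / (m : ℝ) ^ (i + N + 1)) :=
    (summable_nat_add_iff N).2 hs
  have htailbd : ∑' i, (a (i + N) : ℝ) / (m : ℝ) ^ (i + N + 1) ≤ 1 / (m:ℝ) ^ N := by
    have hb : Summable (fun i : ℕ => ((m:ℝ) - 1) / (m:ℝ) ^ (i + N + 1)) := by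
      have : (fun i : ℕ => ((m:ℝ) - 1) / (m:ℝ) ^ (i + N + 1))
          = fun i : ℕ => (((m:ℝ) - 1) / (m:ℝ) ^ (N + 1)) * ((m:ℝ)⁻¹) ^ i := by
        funext i
        rw [show i + N + 1 = (N+1) + i by ring, pow_add, ← div_div, div_eq_mul_inv, inv_pow]
      rw [this]
      exact (summable_geometric_of_lt_one (by positivity)
        (by rw [inv_lt_one_iff₀]; right; exact_mod_cast hm)).mul_left _
    have h1 : ∑' i, (a (i + N) : ℝ) / (m : ℝ) ^ (i + N + 1)
        ≤ ∑' i : ℕ, ((m:ℝ) - 1) / (m:ℝ) ^ (i + N + 1) := by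
      refine Summable.tsum_le_tsum (fun i => ?_) hs' hb
      apply div_le_div_of_nonneg_right ?_ (by positivity)
      have : (a (i + N) : ℝ) + 1 ≤ (m : ℝ) := by exact_mod_cast Nat.succ_le_of_lt (ha _)
      linarith
    have h2 : ∑' i : ℕ, ((m:ℝ) - 1) / (m:ℝ) ^ (i + N + 1) = 1 / (m:ℝ) ^ N := by
      have heq : (fun i : ℕ => ((m:ℝ) - 1) / (m:ℝ) ^ (i + N + 1))
          = fun i : ℕ => (((m:ℝ) - 1) / (m:ℝ) ^ (N + 1)) * ((m:ℝ)⁻¹) ^ i := by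
        funext i
        rw [show i + N + 1 = (N+1) + i by ring, pow_add, ← div_div, div_eq_mul_inv, inv_pow]
      rw [heq, tsum_mul_left, tsum_geometric_of_lt_one (by positivity)
        (by rw [inv_lt_one_iff₀]; right; exact_mod_cast hm)]
      have hmne : (m:ℝ) ≠ 0 := hm0.ne'
      have hm1 : (1:ℝ) < m := by exact_mod_cast hm
      have hne : (m:ℝ) - 1 ≠ 0 := by intro h; linarith
      have h3 : (1 - (m:ℝ)⁻¹)⁻¹ = (m:ℝ)/((m:ℝ)-1) := by
        rw [show (1 - (m:ℝ)⁻¹) = ((m:ℝ)-1)/(m:ℝ) by field_simp]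
        rw [inv_div]
      rw [h3, div_mul_div_comm]
      rw [div_eq_div_iff (by positivity) (by positivity)]
      ring
    linarith
  constructor
  · linarith
  · linarith

/-- Extension of a finite digit word to `ℕ` by zeros. -/
def BMext {m : ℕ} (n : ℕ) (c : Fin n → Fin m) : ℕ → ℕ :=
  fun i => if h : i < n then (c ⟨i, h⟩ : ℕ) else 0

lemma BMext_lt {m : ℕ} (hm : 0 < m) (n : ℕ) (c : Fin n → Fin m) : ∀ i, BMext n c i < m := by
  intro i; unfold BMext; split
  · exact (c _).2
  · exact hm

lemma BMext_sum_eq {m : ℕ} (n : ℕ) (c : Fin n → Fin m) :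
    ∑ i : Fin n, (c i : ℝ) / (m : ℝ) ^ (i.1 + 1)
      = ∑ i ∈ Finset.range n, (BMext n c i : ℝ) / (m : ℝ) ^ (i + 1) := by
  rw [← Fin.sum_univ_eq_sum_range (fun i => (BMext n c i : ℝ) / (m : ℝ) ^ (i + 1)) n]
  refine Finset.sum_congr rfl (fun i _ => ?_)
  unfold BMext
  rw [dif_pos i.2]

lemma fin_digit_sum_bounds {m n : ℕ} (hm : 1 < m) (c : Fin n → Fin m) :
    0 ≤ ∑ i : Fin n, (c i : ℝ) / (m : ℝ) ^ (i.1 + 1) ∧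
      ∑ i : Fin n, (c i : ℝ) / (m : ℝ) ^ (i.1 + 1) ≤ 1 - 1 / (m : ℝ) ^ n := by
  have hm0 : (0:ℝ) < m := by positivity
  constructor
  · exact Finset.sum_nonneg fun i _ => by positivity
  · rw [BMext_sum_eq, Finset.range_eq_Ico]
    have := digitIco_le hm (BMext n c) (BMext_lt (by omega) n c) (Nat.zero_le n)
    simpa using this

/-- Base-`m` digit expansions of the same length with equal values are equal. -/
lemma digit_finsum_inj {m : ℕ} (hm : 1 < m) :
    ∀ {n : ℕ} (a b : Fin n → Fin m),
      ∑ i : Fin n, (a i : ℝ) / (m : ℝ) ^ (i.1 + 1) = ∑ i : Fin n, (b i : ℝ) / (m : ℝ) ^ (i.1 + 1)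
      → a = b := by
  intro n
  induction n with
  | zero => intro a b _; funext i; exact i.elim0
  | succ n ih =>
    intro a b h
    have hm0 : (0:ℝ) < m := by positivity
    rw [Fin.sum_univ_succ, Fin.sum_univ_succ] at h
    have htail : ∀ c : Fin (n+1) → Fin m,
        ∑ i : Fin n, (c i.succ : ℝ) / (m:ℝ) ^ (i.succ.1 + 1)
          = (∑ i : Fin n, (c i.succ : ℝ) / (m:ℝ) ^ (i.1 + 1)) / m := by
      intro c
      rw [Finset.sum_div]
      refine Finset.sum_congr rfl (fun i _ => ?_)
      rw [Fin.val_succ, div_div, ← pow_succ]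
    rw [htail a, htail b] at h
    set A := ∑ i : Fin n, (a (Fin.succ i) : ℝ) / (m:ℝ) ^ (i.1 + 1) with hA
    set B := ∑ i : Fin n, (b (Fin.succ i) : ℝ) / (m:ℝ) ^ (i.1 + 1) with hB
    have hAb := fin_digit_sum_bounds hm (fun i => a (Fin.succ i))
    have hBb := fin_digit_sum_bounds hm (fun i => b (Fin.succ i))
    rw [← hA] at hAb
    rw [← hB] at hBb
    have hmn : (0:ℝ) < 1 / (m:ℝ) ^ n := by positivity
    have h' : (a 0 : ℝ) + A = (b 0 : ℝ) + B := by
      have hme : (m:ℝ) ≠ 0 := hm0.ne'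
      field_simp at h
      have e : (m:ℝ) ^ (((0 : Fin (n+1)) : ℕ) + 1) = m := by simp
      rw [e] at h
      have h2 : ((a 0:ℝ) + A) * m = ((b 0:ℝ) + B) * m := by linarith
      exact mul_right_cancel₀ hme h2
    have h0 : a 0 = b 0 := by
      have h1 : (a 0 : ℕ) < (b 0 : ℕ) + 1 := by
        have : (a 0 : ℝ) < (b 0 : ℝ) + 1 := by linarith [hAb.1, hAb.2, hBb.1, hBb.2]
        exact_mod_cast this
      have h2 : (b 0 : ℕ) < (a 0 : ℕ) + 1 := by
        have : (b 0 : ℝ) < (a 0 : ℝ) + 1 := by linarith [hAb.1, hAb.2, hBb.1, hBb.2]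
        exact_mod_cast this
      have : (a 0 : ℕ) = (b 0 : ℕ) := by omega
      exact Fin.ext this
    have hAB : A = B := by
      have : (a 0 : ℝ) = (b 0 : ℝ) := by exact_mod_cast congrArg Fin.val h0
      linarith
    have htl := ih (fun i => a (Fin.succ i)) (fun i => b (Fin.succ i)) (by rw [← hA, ← hB, hAB])
    funext i
    rcases Fin.eq_zero_or_eq_succ i with rfl | ⟨j, rfl⟩
    · exact h0
    · exact congrFun htl j

/-- The integer value of a digit word (most significant first). -/
def BMival {m : ℕ} (n : ℕ) (c : Fin n → Fin m) : ℤ :=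
  ∑ i : Fin n, ((c i : ℕ) : ℤ) * (m : ℤ) ^ (n - 1 - i.1)

lemma BMival_div {m n : ℕ} (hm : 0 < m) (c : Fin n → Fin m) :
    (BMival n c : ℝ) / (m : ℝ) ^ n = ∑ i : Fin n, (c i : ℝ) / (m : ℝ) ^ (i.1 + 1) := by
  have hm0 : (0:ℝ) < m := by positivity
  unfold BMival
  push_cast
  rw [Finset.sum_div]
  refine Finset.sum_congr rfl (fun i _ => ?_)
  rw [div_eq_div_iff (by positivity) (by positivity), mul_assoc, ← pow_add]
  congr 2
  omega

lemma BMival_inj {m n : ℕ} (hm : 1 < m) (a b : Fin n → Fin m)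
    (h : BMival n a = BMival n b) : a = b := by
  apply digit_finsum_inj hm
  rw [← BMival_div (by omega) a, ← BMival_div (by omega) b, h]

lemma BMival_nonneg {m n : ℕ} (c : Fin n → Fin m) : 0 ≤ BMival n c :=
  Finset.sum_nonneg fun i _ => by positivity

/-- Counting digit words of length `n` whose level-`n` interval meets a ball of radius `r`. -/
lemma word_count {m n : ℕ} (hm : 1 < m) (x r : ℝ) (hr : 0 < r) (hrm : r * (m:ℝ) ^ n ≤ m)
    (A : Finset (Fin n → Fin m))
    (hA : ∀ c ∈ A, ∃ q : ℝ, |q - x| < r ∧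
      (∑ i : Fin n, (c i : ℝ) / (m:ℝ) ^ (i.1 + 1)) ≤ q ∧
      q ≤ (∑ i : Fin n, (c i : ℝ) / (m:ℝ) ^ (i.1 + 1)) + 1 / (m:ℝ) ^ n) :
    A.card ≤ 2 * m + 2 := by
  classical
  have hm0 : (0:ℝ) < m := by positivity
  have hpn : (0:ℝ) < (m:ℝ) ^ n := by positivity
  set J₀ : ℤ := ⌈(m:ℝ) ^ n * (x - r)⌉ - 1 with hJ₀
  set J₁ : ℤ := ⌊(m:ℝ) ^ n * (x + r)⌋ with hJ₁
  have hsub : A.image (BMival n) ⊆ Finset.Icc J₀ J₁ := by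
    intro j hj
    rw [Finset.mem_image] at hj
    obtain ⟨c, hc, rfl⟩ := hj
    obtain ⟨q, hq, hq1, hq2⟩ := hA c hc
    rw [abs_sub_lt_iff] at hq
    have hp : (BMival n c : ℝ) / (m:ℝ) ^ n = ∑ i : Fin n, (c i : ℝ) / (m:ℝ) ^ (i.1 + 1) :=
      BMival_div (by omega) c
    rw [Finset.mem_Icc]
    constructor
    · rw [hJ₀, sub_le_iff_le_add, Int.ceil_le]
      have hxr : x - r ≤ (BMival n c : ℝ) / (m:ℝ) ^ n + 1 / (m:ℝ) ^ n := by
        rw [hp]; linarith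
      calc (m:ℝ)^n * (x - r)
          ≤ (m:ℝ)^n * ((BMival n c : ℝ) / (m:ℝ)^n + 1 / (m:ℝ)^n) := by nlinarith
        _ = (BMival n c : ℝ) + 1 := by field_simp
        _ = ((BMival n c + 1 : ℤ) : ℝ) := by push_cast; ring
    · rw [hJ₁, Int.le_floor]
      have : (BMival n c : ℝ) / (m:ℝ) ^ n ≤ x + r := by rw [hp]; linarith
      calc (BMival n c : ℝ) = ((BMival n c : ℝ) / (m:ℝ)^n) * (m:ℝ)^n := by field_simp
        _ ≤ (x + r) * (m:ℝ)^n := by nlinarith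
        _ = (m:ℝ)^n * (x + r) := by ring
  have hcard : A.card ≤ (Finset.Icc J₀ J₁).card := by
    rw [← Finset.card_image_of_injOn (f := BMival n) (fun a _ b _ h => BMival_inj hm a b h)]
    exact Finset.card_le_card hsub
  have hIcc : (Finset.Icc J₀ J₁).card ≤ 2 * m + 2 := by
    rw [Int.card_Icc]
    rw [Int.toNat_le]
    have h1 : (J₁ : ℝ) ≤ (m:ℝ)^n * (x + r) := Int.floor_le _
    have h2 : (m:ℝ)^n * (x - r) ≤ (J₀ : ℝ) + 1 := by
      rw [hJ₀]; push_cast; linarith [Int.le_ceil ((m:ℝ)^n * (x - r))]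
    have : (J₁ + 1 - J₀ : ℝ) ≤ 2 * m + 2 := by
      push_cast
      nlinarith
    exact_mod_cast this
  omega

/-- The uniform measure `μ` on a Bedford-McMullen set with uniform fibers satisfies the
upper mass bound `μ(B(x,r)) ≤ C r^{1+d}` with `d = log k / log m`. -/
theorem stmt14 (m l k : ℕ) (hl : 1 < l) (hlm : l < m) (hk : 1 ≤ k) (hkm : k < m)
    (D : ℕ → Finset (Fin m × Fin l)) (hD : UniformFibers k D)
    (μ : Measure (ℝ × ℝ)) (hprob : IsProbabilityMeasure μ)
    (hsupp : μ (BMset m l D)ᶜ = 0)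
    (hrect : ∀ (n : ℕ) (w : Fin n → Fin m × Fin l), (∀ i : Fin n, w i ∈ D i.1) →
      μ (BMset m l D ∩ cylRect m l n w) = (((k : ℝ≥0∞) * l)⁻¹) ^ n) :
    ∃ C > (0 : ℝ), ∀ x ∈ BMset m l D, ∀ r > (0 : ℝ),
      μ (Metric.ball x r) ≤
        ENNReal.ofReal (C * r ^ (1 + Real.log k / Real.log m)) := by
  classical
  have hm : 1 < m := hl.trans hlm
  have hmR : (1:ℝ) < m := by exact_mod_cast hm
  have hlR : (1:ℝ) < l := by exact_mod_cast hl
  have hkR : (1:ℝ) ≤ k := by exact_mod_cast hk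
  have hm0 : (0:ℝ) < m := by linarith
  have hl0 : (0:ℝ) < l := by linarith
  have hk0 : (0:ℝ) < k := by linarith
  set d : ℝ := Real.log k / Real.log m with hd
  have hd0 : 0 ≤ d :=
    div_nonneg (Real.log_nonneg hkR) (Real.log_nonneg hmR.le)
  set C : ℝ := (2*(m:ℝ)+2) * (2*(l:ℝ)+2) with hC
  have hC1 : (1:ℝ) ≤ C := by nlinarith
  refine ⟨C, by positivity, ?_⟩
  intro x hx r hr
  by_cases hr1 : 1 ≤ r
  · -- large radius: trivial by probability
    have h1 : μ (Metric.ball x r) ≤ 1 := prob_le_one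
    refine h1.trans ?_
    rw [ENNReal.one_le_ofReal]
    have h2 : (1:ℝ) ≤ r ^ (1 + d) := Real.one_le_rpow hr1 (by linarith)
    nlinarith
  push_neg at hr1
  -- choose the two scales
  have hexm : ∃ n, ((m:ℝ)⁻¹) ^ n < r :=
    exists_pow_lt_of_lt_one hr (by rw [inv_lt_one_iff₀]; right; exact hmR)
  have hexl : ∃ n, ((l:ℝ)⁻¹) ^ n < r :=
    exists_pow_lt_of_lt_one hr (by rw [inv_lt_one_iff₀]; right; exact hlR)
  set n₁ := Nat.find hexm with hn₁def
  set N := Nat.find hexl with hNdef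
  have hfind₁ : ((m:ℝ)⁻¹) ^ n₁ < r := Nat.find_spec hexm
  have hfindN : ((l:ℝ)⁻¹) ^ N < r := Nat.find_spec hexl
  have hn₁N : n₁ ≤ N := by
    apply Nat.find_min' hexm
    calc ((m:ℝ)⁻¹) ^ N ≤ ((l:ℝ)⁻¹) ^ N :=
          pow_le_pow_left₀ (by positivity) (by rw [inv_le_inv₀ hm0 hl0]; exact_mod_cast hlm.le) N
      _ < r := hfindN
  have hn₁pos : 0 < n₁ := by
    rcases Nat.eq_zero_or_pos n₁ with h | h
    · exfalso; rw [h] at hfind₁; simp at hfind₁; linarith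
    · exact h
  have hNpos : 0 < N := by
    rcases Nat.eq_zero_or_pos N with h | h
    · exfalso; rw [h] at hfindN; simp at hfindN; linarith
    · exact h
  have hrm : r * (m:ℝ) ^ n₁ ≤ m := by
    have hmin := Nat.find_min hexm (m := n₁ - 1) (by omega)
    push_neg at hmin
    have e : (m:ℝ) ^ n₁ = (m:ℝ) ^ (n₁ - 1) * m := by
      rw [← pow_succ]; congr 1; omega
    have hp : (0:ℝ) < (m:ℝ) ^ (n₁ - 1) := by positivity
    calc r * (m:ℝ) ^ n₁ ≤ ((m:ℝ)⁻¹) ^ (n₁-1) * ((m:ℝ) ^ (n₁ - 1) * m) := by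
          rw [e]; exact mul_le_mul_of_nonneg_right hmin (by positivity)
      _ = m := by rw [inv_pow]; field_simp
  have hrl : r * (l:ℝ) ^ N ≤ l := by
    have hmin := Nat.find_min hexl (m := N - 1) (by omega)
    push_neg at hmin
    have e : (l:ℝ) ^ N = (l:ℝ) ^ (N - 1) * l := by
      rw [← pow_succ]; congr 1; omega
    have hp : (0:ℝ) < (l:ℝ) ^ (N - 1) := by positivity
    calc r * (l:ℝ) ^ N ≤ ((l:ℝ)⁻¹) ^ (N-1) * ((l:ℝ) ^ (N - 1) * l) := by
          rw [e]; exact mul_le_mul_of_nonneg_right hmin (by positivity)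
      _ = l := by rw [inv_pow]; field_simp
  -- the finite family of admissible words whose rectangles meet the ball
  set S : Finset (Fin N → Fin m × Fin l) := Finset.univ.filter
    (fun w => (∀ i : Fin N, w i ∈ D i.1) ∧
      (Metric.ball x r ∩ BMset m l D ∩ cylRect m l N w).Nonempty) with hSdef
  have hcover : Metric.ball x r ∩ BMset m l D ⊆
      ⋃ w ∈ S, (BMset m l D ∩ cylRect m l N w) := by
    rintro q ⟨hqball, hqBM⟩
    obtain ⟨ω, hω, hq1, hq2⟩ := hqBM
    set w : Fin N → Fin m × Fin l := fun i => ω i.1 with hw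
    have hqrect : q ∈ cylRect m l N w := by
      have h1 := digit_tsum_mem hm (fun n => ((ω n).1 : ℕ)) (fun n => ((ω n).1).2) N
      have h2 := digit_tsum_mem hl (fun n => ((ω n).2 : ℕ)) (fun n => ((ω n).2).2) N
      refine ⟨?_, ?_⟩
      · rw [show (∑ i : Fin N, ((w i).1 : ℝ) / (m:ℝ) ^ (i.1 + 1))
            = ∑ i ∈ Finset.range N, ((ω i).1 : ℝ) / (m:ℝ) ^ (i + 1) from
            Fin.sum_univ_eq_sum_range (fun j => ((ω j).1 : ℝ) / (m:ℝ) ^ (j + 1)) N]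
        rw [hq1]
        exact h1
      · rw [show (∑ i : Fin N, ((w i).2 : ℝ) / (l:ℝ) ^ (i.1 + 1))
            = ∑ i ∈ Finset.range N, ((ω i).2 : ℝ) / (l:ℝ) ^ (i + 1) from
            Fin.sum_univ_eq_sum_range (fun j => ((ω j).2 : ℝ) / (l:ℝ) ^ (j + 1)) N]
        rw [hq2]
        exact h2
    have hqBM' : q ∈ BMset m l D := ⟨ω, hω, hq1, hq2⟩
    have hwS : w ∈ S := by
      rw [hSdef, Finset.mem_filter]
      exact ⟨Finset.mem_univ _, fun i => hω i.1, ⟨q, ⟨hqball, hqBM'⟩, hqrect⟩⟩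
    exact Set.mem_biUnion hwS ⟨hqBM', hqrect⟩
  have hμ1 : μ (Metric.ball x r) ≤ (S.card : ℝ≥0∞) * (((k : ℝ≥0∞) * l)⁻¹) ^ N := by
    calc μ (Metric.ball x r)
        ≤ μ ((Metric.ball x r ∩ BMset m l D) ∪ (BMset m l D)ᶜ) := by
          apply measure_mono
          intro q hq
          by_cases h : q ∈ BMset m l D
          · exact Or.inl ⟨hq, h⟩
          · exact Or.inr h
      _ ≤ μ (Metric.ball x r ∩ BMset m l D) + μ (BMset m l D)ᶜ := measure_union_le _ _
      _ = μ (Metric.ball x r ∩ BMset m l D) := by rw [hsupp, add_zero]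
      _ ≤ μ (⋃ w ∈ S, (BMset m l D ∩ cylRect m l N w)) := measure_mono hcover
      _ ≤ ∑ w ∈ S, μ (BMset m l D ∩ cylRect m l N w) := measure_biUnion_finset_le _ _
      _ = ∑ _w ∈ S, (((k : ℝ≥0∞) * l)⁻¹) ^ N := by
          refine Finset.sum_congr rfl (fun w hw => ?_)
          rw [hSdef, Finset.mem_filter] at hw
          exact hrect N w hw.2.1
      _ = (S.card : ℝ≥0∞) * (((k : ℝ≥0∞) * l)⁻¹) ^ N := by
          rw [Finset.sum_const, nsmul_eq_mul]
  have hcount : S.card ≤ k ^ (N - n₁) * ((2*m+2) * (2*l+2)) := by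
    set F : (Fin N → Fin m × Fin l) → ℤ × (Fin N → Fin l) :=
      fun w => (BMival n₁ (fun j => (w (Fin.castLE hn₁N j)).1), fun i => (w i).2) with hF
    have hfc1 : (Finset.univ.filter (fun i : Fin N => (i:ℕ) < n₁)).card = n₁ := by
      have h : (Finset.univ.filter (fun i : Fin N => (i:ℕ) < n₁)).card
          = (Finset.univ : Finset (Fin n₁)).card := by
        apply Finset.card_bij' (fun i hi => (⟨i.1, (Finset.mem_filter.1 hi).2⟩ : Fin n₁))
          (fun j _ => Fin.castLE hn₁N j)
        · intro i hi; exact Finset.mem_univ _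
        · intro j hj; exact Fin.ext rfl
        · intro j hj; exact Fin.ext rfl
        · intro j hj
          rw [Finset.mem_filter]
          exact ⟨Finset.mem_univ _, j.2⟩
      rw [h, Finset.card_fin]
    have hfc : (Finset.univ.filter (fun i : Fin N => ¬ (i:ℕ) < n₁)).card = N - n₁ := by
      have h := Finset.card_filter_add_card_filter_not
        (s := (Finset.univ : Finset (Fin N))) (p := fun i : Fin N => (i:ℕ) < n₁)
      rw [hfc1, Finset.card_univ, Fintype.card_fin] at h
      omega
    have hfiber : ∀ b ∈ S.image F, (S.filter (fun w => F w = b)).card ≤ k ^ (N - n₁) := by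
      intro b hb
      rcases (S.filter (fun w => F w = b)).eq_empty_or_nonempty with hTe | ⟨w₀, hw₀⟩
      · rw [hTe]; simp
      set G : Fin N → Finset (Fin m) := fun i =>
        if (i:ℕ) < n₁ then {(w₀ i).1}
        else ((D i.1).filter (fun q => q.2 = b.2 i)).image Prod.fst with hG
      have hinj : (S.filter (fun w => F w = b)).card ≤ (Fintype.piFinset G).card := by
        apply Finset.card_le_card_of_injOn (fun w => fun i => (w i).1)
        · intro w hw
          rw [Finset.mem_coe, Finset.mem_filter] at hw
          obtain ⟨hwS, hFw⟩ := hw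
          have hFw₀ := (Finset.mem_filter.1 hw₀).2
          have hsnd : ∀ i : Fin N, (w i).2 = b.2 i := by
            intro i
            exact congrFun (congrArg Prod.snd hFw) i
          rw [Finset.mem_coe, Fintype.mem_piFinset]
          intro i
          rw [hG]
          dsimp only
          by_cases hi : (i:ℕ) < n₁
          · rw [if_pos hi, Finset.mem_singleton]
            have h1 : BMival n₁ (fun j => (w (Fin.castLE hn₁N j)).1)
                = BMival n₁ (fun j => (w₀ (Fin.castLE hn₁N j)).1) := by
              have e1 := congrArg Prod.fst hFw
              have e2 := congrArg Prod.fst hFw₀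
              exact e1.trans e2.symm
            have h2 := BMival_inj hm _ _ h1
            have h3 := congrFun h2 ⟨i.1, hi⟩
            have h4 : Fin.castLE hn₁N (⟨i.1, hi⟩ : Fin n₁) = i := Fin.ext rfl
            rw [h4] at h3
            exact h3
          · rw [if_neg hi, Finset.mem_image]
            refine ⟨w i, ?_, rfl⟩
            rw [Finset.mem_filter]
            rw [hSdef, Finset.mem_filter] at hwS
            exact ⟨hwS.2.1 i, hsnd i⟩
        · intro w hw w' hw' h
          funext i
          have h1 : (w i).1 = (w' i).1 := congrFun h i
          have hsnd : (w i).2 = (w' i).2 := by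
            have e1 := congrArg Prod.snd (Finset.mem_filter.1 hw).2
            have e2 := congrArg Prod.snd (Finset.mem_filter.1 hw').2
            exact (congrFun e1 i).trans (congrFun (e2.symm) i)
          exact Prod.ext h1 hsnd
      refine hinj.trans ?_
      rw [Fintype.card_piFinset]
      calc ∏ i : Fin N, (G i).card ≤ ∏ i : Fin N, (if (i:ℕ) < n₁ then 1 else k) := by
            refine Finset.prod_le_prod' (fun i _ => ?_)
            rw [hG]
            dsimp only
            by_cases hi : (i:ℕ) < n₁
            · rw [if_pos hi, if_pos hi, Finset.card_singleton]
            · rw [if_neg hi, if_neg hi]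
              refine Finset.card_image_le.trans ?_
              rw [hD i.1 (b.2 i)]
        _ = k ^ (N - n₁) := by
            rw [Finset.prod_ite, Finset.prod_const_one, one_mul, Finset.prod_const, hfc]
    have h1 : S.card ≤ k ^ (N - n₁) * (S.image F).card :=
      Finset.card_le_mul_card_image S _ hfiber
    have hx1 : (S.image (fun w => (F w).1)).card ≤ 2*m+2 := by
      set A₁ : Finset (Fin n₁ → Fin m) :=
        S.image (fun w j => (w (Fin.castLE hn₁N j)).1) with hA₁
      have he : S.image (fun w => (F w).1) = A₁.image (BMival n₁) := by
        rw [hA₁, Finset.image_image]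
        rfl
      rw [he]
      refine Finset.card_image_le.trans ?_
      apply word_count hm x.1 r hr hrm A₁
      intro c hc
      rw [hA₁, Finset.mem_image] at hc
      obtain ⟨w, hwS, rfl⟩ := hc
      rw [hSdef, Finset.mem_filter] at hwS
      obtain ⟨-, hadm, q, ⟨hqball, hqBM⟩, hqrect⟩ := hwS
      have hqx : |q.1 - x.1| < r := by
        rw [Metric.mem_ball, Prod.dist_eq] at hqball
        have h1 : dist q.1 x.1 < r := lt_of_le_of_lt (le_max_left _ _) hqball
        rwa [Real.dist_eq] at h1
      set a : ℕ → ℕ := BMext N (fun i : Fin N => ((w i).1 : Fin m)) with ha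
      have haN : ∀ i, a i < m := BMext_lt (by omega) N _
      have hsf : (∑ i : Fin N, ((w i).1 : ℝ) / (m:ℝ) ^ (i.1 + 1))
          = ∑ i ∈ Finset.range N, (a i : ℝ) / (m:ℝ) ^ (i + 1) :=
        BMext_sum_eq N (fun i => (w i).1)
      have hp : (∑ j : Fin n₁, ((w (Fin.castLE hn₁N j)).1 : ℝ) / (m:ℝ) ^ (j.1 + 1))
          = ∑ i ∈ Finset.range n₁, (a i : ℝ) / (m:ℝ) ^ (i + 1) := by
        rw [BMext_sum_eq n₁ (fun j => (w (Fin.castLE hn₁N j)).1)]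
        refine Finset.sum_congr rfl (fun i hi => ?_)
        rw [Finset.mem_range] at hi
        congr 2
        rw [ha]
        unfold BMext
        rw [dif_pos (hi.trans_le hn₁N), dif_pos hi]
        rfl
      have hIco := Finset.sum_Ico_eq_sub (fun i => (a i : ℝ) / (m:ℝ) ^ (i + 1)) hn₁N
      have hnn : (0:ℝ) ≤ ∑ i ∈ Finset.Ico n₁ N, (a i : ℝ) / (m:ℝ) ^ (i + 1) :=
        Finset.sum_nonneg (fun i _ => by positivity)
      have hub := digitIco_le hm a haN hn₁N
      have h1 := hqrect.1.1
      have h2 := hqrect.1.2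
      refine ⟨q.1, hqx, ?_, ?_⟩
      · rw [hp]
        rw [hsf] at h1
        rw [hIco] at hnn
        linarith
      · rw [hp]
        rw [hsf] at h2
        rw [hIco] at hub
        linarith
    have hx2 : (S.image (fun w => (F w).2)).card ≤ 2*l+2 := by
      apply word_count hl x.2 r hr hrl
      intro c hc
      rw [Finset.mem_image] at hc
      obtain ⟨w, hwS, rfl⟩ := hc
      rw [hSdef, Finset.mem_filter] at hwS
      obtain ⟨-, hadm, q, ⟨hqball, hqBM⟩, hqrect⟩ := hwS
      have hqy : |q.2 - x.2| < r := by
        rw [Metric.mem_ball, Prod.dist_eq] at hqball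
        have h1 : dist q.2 x.2 < r := lt_of_le_of_lt (le_max_right _ _) hqball
        rwa [Real.dist_eq] at h1
      exact ⟨q.2, hqy, hqrect.2.1, hqrect.2.2⟩
    have h2 : (S.image F).card ≤ (2*m+2) * (2*l+2) := by
      have hsub : S.image F ⊆
          (S.image (fun w => (F w).1)) ×ˢ (S.image (fun w => (F w).2)) := by
        intro b hb
        rw [Finset.mem_image] at hb
        obtain ⟨w, hw, rfl⟩ := hb
        exact Finset.mem_product.2 ⟨Finset.mem_image_of_mem _ hw, Finset.mem_image_of_mem _ hw⟩
      refine (Finset.card_le_card hsub).trans ?_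
      rw [Finset.card_product]
      exact Nat.mul_le_mul hx1 hx2
    calc S.card ≤ k ^ (N - n₁) * (S.image F).card := h1
      _ ≤ k ^ (N - n₁) * ((2*m+2) * (2*l+2)) := Nat.mul_le_mul_left _ h2
  -- final arithmetic
  have hkl : (((k : ℝ≥0∞) * l)⁻¹) ^ N = ENNReal.ofReal ((((k:ℝ) * l)⁻¹) ^ N) := by
    rw [ENNReal.ofReal_pow (by positivity), ENNReal.ofReal_inv_of_pos (by positivity),
      ENNReal.ofReal_mul (by positivity), ENNReal.ofReal_natCast, ENNReal.ofReal_natCast]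
  have hmd : ((m:ℝ)⁻¹) ^ d = (k:ℝ)⁻¹ := by
    rw [Real.rpow_def_of_pos (by positivity), Real.log_inv, hd]
    have hlm0 : Real.log m ≠ 0 := ne_of_gt (Real.log_pos hmR)
    rw [show -Real.log m * (Real.log k / Real.log m) = -Real.log k by field_simp]
    rw [Real.exp_neg, Real.exp_log hk0]
  have hkd : (((k:ℝ)⁻¹) ^ n₁ : ℝ) ≤ r ^ d := by
    have hstep : (((m:ℝ)⁻¹) ^ n₁ : ℝ) ^ d = ((k:ℝ)⁻¹) ^ n₁ := by
      rw [← Real.rpow_natCast ((m:ℝ)⁻¹) n₁, ← Real.rpow_mul (by positivity), mul_comm,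
        Real.rpow_mul (by positivity), hmd, Real.rpow_natCast]
    rw [← hstep]
    exact Real.rpow_le_rpow (by positivity) hfind₁.le hd0
  have hreal : (S.card : ℝ) * (((k:ℝ) * l)⁻¹) ^ N ≤ C * r ^ (1 + d) := by
    have h1 : (S.card : ℝ) ≤ (k:ℝ) ^ (N - n₁) * C := by
      rw [hC]
      have h := hcount
      have : (S.card : ℝ) ≤ ((k ^ (N - n₁) * ((2*m+2) * (2*l+2)) : ℕ) : ℝ) := by
        exact_mod_cast h
      push_cast at this
      linarith
    have hinv : (((k:ℝ) * l)⁻¹) ^ N = ((k:ℝ)⁻¹)^N * ((l:ℝ)⁻¹)^N := by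
      rw [mul_inv, mul_pow]
    have hpow : (k:ℝ) ^ (N - n₁) * ((k:ℝ)⁻¹)^N = ((k:ℝ)⁻¹)^n₁ := by
      have e : (k:ℝ)^(N-n₁) * (k:ℝ)^n₁ = (k:ℝ)^N := by rw [← pow_add]; congr 1; omega
      rw [inv_pow, inv_pow, ← e, mul_inv]
      field_simp
    have hld : (((l:ℝ)⁻¹)^N : ℝ) ≤ r := hfindN.le
    have hC0 : (0:ℝ) ≤ C := by positivity
    calc (S.card : ℝ) * (((k:ℝ) * l)⁻¹) ^ N
        ≤ ((k:ℝ) ^ (N - n₁) * C) * (((k:ℝ)⁻¹)^N * ((l:ℝ)⁻¹)^N) := by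
          rw [hinv]
          exact mul_le_mul_of_nonneg_right h1 (by positivity)
      _ = C * (((k:ℝ) ^ (N - n₁) * ((k:ℝ)⁻¹)^N) * ((l:ℝ)⁻¹)^N) := by ring
      _ = C * (((k:ℝ)⁻¹)^n₁ * ((l:ℝ)⁻¹)^N) := by rw [hpow]
      _ ≤ C * (r ^ d * r) := by
          refine mul_le_mul_of_nonneg_left ?_ hC0
          exact mul_le_mul hkd hld (by positivity) (Real.rpow_nonneg hr.le d)
      _ = C * r ^ (1 + d) := by
          rw [Real.rpow_add hr, Real.rpow_one]; ring
  calc μ (Metric.ball x r) ≤ (S.card : ℝ≥0∞) * (((k : ℝ≥0∞) * l)⁻¹) ^ N := hμ1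
    _ = ENNReal.ofReal ((S.card : ℝ) * (((k:ℝ) * l)⁻¹) ^ N) := by
        rw [ENNReal.ofReal_mul (by positivity), hkl, ENNReal.ofReal_natCast]
    _ ≤ ENNReal.ofReal (C * r ^ (1 + d)) := ENNReal.ofReal_le_ofReal hreal
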